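/- Let r ∈ (0,1), θ ∈ ℝ, and ṙ, θ̇ ∈ ℝ with ṙ ≠ 0, and suppose θ is a rational multiple of π. If for every integer n ≥ 1 one has ṙ·(2rⁿ − r^{2n}·cos(nθ) − cos(nθ)) = −r·(1 − r^{2n})·θ̇·sin(nθ), then a contradiction follows (i.e., no such data exist). -/

import Mathlib

/-- Rational-angle case of the degeneracy trichotomy: no such data exist. -/
theorem stmt_1 (r θ rdot θdot : ℝ) (hr0 : 0 < r) (hr1 : r < 1) (hrdot : rdot ≠ 0)
    (hθ : ∃ q : ℚ, θ = (q : ℝ) * Real.pi)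
    (h : ∀ n : ℕ, 1 ≤ n →
      rdot * (2 * r ^ n - r ^ (2 * n) * Real.cos (n * θ) - Real.cos (n * θ)) =
        - (r * (1 - r ^ (2 * n)) * θdot * Real.sin (n * θ))) :
    False := by
  obtain ⟨q, rfl⟩ := hθ
  set n : ℕ := 2 * q.den with hn
  have hn1 : 1 ≤ n := by
    have := q.den_pos
    omega
  have key : (n : ℝ) * ((q : ℝ) * Real.pi) = (q.num : ℝ) * (2 * Real.pi) := by
    have hden : ((q.den : ℝ)) ≠ 0 := by exact_mod_cast q.den_pos.ne'
    have hq : (q : ℝ) = (q.num : ℝ) / (q.den : ℝ) := by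
      rw [Rat.cast_def]
    rw [hq, hn]
    push_cast
    field_simp
  have hcos : Real.cos ((n : ℝ) * ((q : ℝ) * Real.pi)) = 1 := by
    rw [key, Real.cos_int_mul_two_pi]
  have hsin : Real.sin ((n : ℝ) * ((q : ℝ) * Real.pi)) = 0 := by
    rw [key]
    have : (q.num : ℝ) * (2 * Real.pi) = (2 * q.num : ℤ) * Real.pi := by push_cast; ring
    rw [this, Real.sin_int_mul_pi]
  have heq := h n hn1
  rw [hcos, hsin] at heq
  simp only [mul_zero, neg_zero, mul_one] at heq
  have h2 : 2 * r ^ n - r ^ (2 * n) - 1 = 0 := by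
    rcases mul_eq_zero.mp heq with h' | h'
    · exact absurd h' hrdot
    · linarith
  have hrn : r ^ n = 1 := by
    have : (r ^ n - 1) ^ 2 = 0 := by
      have : r ^ (2 * n) = (r ^ n) ^ 2 := by rw [mul_comm, pow_mul]
      nlinarith [this]
    nlinarith [sq_nonneg (r ^ n - 1), this]
  have : r ^ n < 1 := pow_lt_one₀ hr0.le hr1 (by omega)
  linarith
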